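/- Let K ⊂ ℝ^n be compact and suppose there is a constant C_K such that for every ε > 0 the set K × K can be covered by at most C_K/ε^{2d} balls of radius ε (so K has box-counting dimension at most d in the relevant sense). Parametrize linear maps from ℝ^n to ℝ^D by their entries: for c ∈ ℝ^{nD}, let F_c(x) = Cx where C is the D×n matrix with entries given by c. If D > 2d, then for every a₀ > 0, the set of c ∈ ℝ^{nD} for which F_c restricted to K is injective has probability 1 relative to the ball {c : ‖c‖ ≤ a₀}. -/

import Mathlib

open MeasureTheory Metric Finset

namespace Stmt6Aux

variable {n D : ℕ}

noncomputable def Fm (c : EuclideanSpace ℝ (Fin D × Fin n)) (x : EuclideanSpace ℝ (Fin n)) :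
    EuclideanSpace ℝ (Fin D) := WithLp.toLp 2 (fun i => ∑ j, c (i, j) * x j)

lemma norm_sq_eq' {ι : Type*} [Fintype ι] (x : EuclideanSpace ℝ ι) :
    ‖x‖ ^ 2 = ∑ i, x i ^ 2 := by
  rw [EuclideanSpace.norm_eq, Real.sq_sqrt (by positivity)]
  simp [Real.norm_eq_abs, sq_abs]

lemma abs_coord_le_norm {ι : Type*} [Fintype ι] (x : EuclideanSpace ℝ ι) (p : ι) :
    |x p| ≤ ‖x‖ := by
  have h : x p ^ 2 ≤ ‖x‖ ^ 2 := by
    rw [norm_sq_eq']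
    exact Finset.single_le_sum (f := fun i => x i ^ 2) (fun i _ => sq_nonneg _) (mem_univ p)
  calc |x p| = Real.sqrt (x p ^ 2) := (Real.sqrt_sq_eq_abs _).symm
    _ ≤ Real.sqrt (‖x‖ ^ 2) := Real.sqrt_le_sqrt h
    _ = ‖x‖ := Real.sqrt_sq (norm_nonneg _)

lemma norm_Fm_le (c : EuclideanSpace ℝ (Fin D × Fin n)) (z : EuclideanSpace ℝ (Fin n)) :
    ‖Fm c z‖ ≤ ‖c‖ * ‖z‖ := by
  have h : ‖Fm c z‖ ^ 2 ≤ (‖c‖ * ‖z‖) ^ 2 := by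
    rw [norm_sq_eq', mul_pow, norm_sq_eq', norm_sq_eq', Fintype.sum_prod_type]
    calc ∑ i, Fm c z i ^ 2 ≤ ∑ i : Fin D, (∑ j, c (i, j) ^ 2) * (∑ j, z j ^ 2) := by
          refine Finset.sum_le_sum fun i _ => ?_
          exact Finset.sum_mul_sq_le_sq_mul_sq univ (fun j => c (i, j)) z
      _ = (∑ i : Fin D, ∑ j, c (i, j) ^ 2) * ∑ j, z j ^ 2 := by rw [← Finset.sum_mul]
  calc ‖Fm c z‖ = Real.sqrt (‖Fm c z‖ ^ 2) := (Real.sqrt_sq (norm_nonneg _)).symm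
    _ ≤ Real.sqrt ((‖c‖ * ‖z‖) ^ 2) := Real.sqrt_le_sqrt h
    _ = ‖c‖ * ‖z‖ := Real.sqrt_sq (by positivity)

lemma Fm_sub (c : EuclideanSpace ℝ (Fin D × Fin n)) (x y : EuclideanSpace ℝ (Fin n)) :
    Fm c (x - y) = Fm c x - Fm c y := by
  ext i
  simp [Fm, PiLp.sub_apply, mul_sub, Finset.sum_sub_distrib]

lemma Fm_smul (c : EuclideanSpace ℝ (Fin D × Fin n)) (r : ℝ) (x : EuclideanSpace ℝ (Fin n)) :
    Fm c (r • x) = r • Fm c x := by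
  ext i
  simp [Fm, PiLp.smul_apply, smul_eq_mul, Finset.mul_sum, mul_left_comm]

lemma slab_volume (a₀ ρ : ℝ) (hρ : 0 ≤ ρ) (ha : 0 ≤ a₀)
    (u : EuclideanSpace ℝ (Fin n)) (hu : ‖u‖ = 1) :
    volume {c : EuclideanSpace ℝ (Fin D × Fin n) | ‖Fm c u‖ ≤ ρ ∧ ‖c‖ ≤ a₀}
      ≤ ENNReal.ofReal ((2 * ρ) ^ D * (2 * a₀) ^ (D * (n - 1))) := by
  classical
  have hn : 0 < n := by
    rcases Nat.eq_zero_or_pos n with h | h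
    · subst h
      have hu0 : u = 0 := by ext j; exact j.elim0
      rw [hu0, norm_zero] at hu; norm_num at hu
    · exact h
  set i₀ : Fin n := ⟨0, hn⟩ with hi₀
  obtain ⟨B, hB⟩ : ∃ B : OrthonormalBasis (Fin n) ℝ (EuclideanSpace ℝ (Fin n)), B i₀ = u := by
    have hcard : Module.finrank ℝ (EuclideanSpace ℝ (Fin n)) = Fintype.card (Fin n) := by simp
    have hortho : Orthonormal ℝ (({i₀} : Set (Fin n)).restrict (fun _ => u)) := by
      rw [orthonormal_iff_ite]
      intro i j
      have hij : i = j := Subtype.ext (by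
        have h1 := i.2; have h2 := j.2
        simp only [Set.mem_singleton_iff] at h1 h2
        rw [h1, h2])
      subst hij
      have h1 : (inner ℝ u u : ℝ) = 1 := by
        rw [real_inner_self_eq_norm_sq, hu]; norm_num
      simpa [Set.restrict] using h1
    obtain ⟨B, hB⟩ := hortho.exists_orthonormalBasis_extension_of_card_eq hcard
    exact ⟨B, hB i₀ rfl⟩
  let e₁ : EuclideanSpace ℝ (Fin D × Fin n) ≃ₗᵢ[ℝ] PiLp 2 (fun _ : Σ _ : Fin D, Fin n => ℝ) :=
    LinearIsometryEquiv.piLpCongrLeft 2 ℝ ℝ (Equiv.sigmaEquivProd (Fin D) (Fin n)).symm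
  let e₂ : PiLp 2 (fun _ : Σ _ : Fin D, Fin n => ℝ) ≃ₗᵢ[ℝ]
      PiLp 2 (fun _ : Fin D => EuclideanSpace ℝ (Fin n)) :=
    LinearIsometryEquiv.piLpCurry ℝ 2 (fun _ _ => ℝ)
  let e₃ : PiLp 2 (fun _ : Fin D => EuclideanSpace ℝ (Fin n)) ≃ₗᵢ[ℝ]
      PiLp 2 (fun _ : Fin D => EuclideanSpace ℝ (Fin n)) :=
    LinearIsometryEquiv.piLpCongrRight 2 (fun _ : Fin D => B.repr)
  let Ψ : EuclideanSpace ℝ (Fin D × Fin n) ≃ₗᵢ[ℝ] EuclideanSpace ℝ (Fin D × Fin n) :=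
    ((e₁.trans e₂).trans e₃).trans (e₂.symm.trans e₁.symm)
  have hΨ : ∀ (c : EuclideanSpace ℝ (Fin D × Fin n)) (p : Fin D × Fin n),
      Ψ c p = B.repr (WithLp.toLp 2 (fun j => c (p.1, j))) p.2 := fun c p => rfl
  let b : Fin D × Fin n → ℝ := fun p => if p.2 = i₀ then ρ else a₀
  have hbnn : ∀ p, 0 ≤ b p := by
    intro p; by_cases h : p.2 = i₀ <;> simp [b, h, hρ, ha]
  let pibox : Set ((Fin D × Fin n) → ℝ) := Set.pi Set.univ fun p => Set.Icc (-(b p)) (b p)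
  have hpibox_meas : MeasurableSet pibox :=
    MeasurableSet.univ_pi fun p => measurableSet_Icc
  let box : Set (EuclideanSpace ℝ (Fin D × Fin n)) :=
    (MeasurableEquiv.toLp 2 ((Fin D × Fin n) → ℝ)).symm ⁻¹' pibox
  have hbox_meas : MeasurableSet box := (MeasurableEquiv.toLp 2 ((Fin D × Fin n) → ℝ)).symm.measurable hpibox_meas
  have hsub : {c : EuclideanSpace ℝ (Fin D × Fin n) | ‖Fm c u‖ ≤ ρ ∧ ‖c‖ ≤ a₀} ⊆ Ψ ⁻¹' box := by
    rintro c ⟨h1, h2⟩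
    have hmem : ∀ p : Fin D × Fin n, Ψ c p ∈ Set.Icc (-(b p)) (b p) := by
      intro p
      rw [Set.mem_Icc, ← abs_le]
      by_cases hp : p.2 = i₀
      · have : Ψ c p = Fm c u p.1 := by
          rw [hΨ, hp, OrthonormalBasis.repr_apply_apply, hB]
          simp only [Fm, PiLp.inner_apply, RCLike.inner_apply, conj_trivial]
        rw [this]
        simp only [b, hp, if_pos]
        exact (abs_coord_le_norm (Fm c u) p.1).trans h1
      · simp only [b, if_neg hp]
        calc |Ψ c p| ≤ ‖Ψ c‖ := abs_coord_le_norm _ _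
          _ = ‖c‖ := Ψ.norm_map c
          _ ≤ a₀ := h2
    exact fun p _ => hmem p
  have hboxvol : volume box = ∏ p : Fin D × Fin n, ENNReal.ofReal (2 * b p) := by
    rw [(EuclideanSpace.volume_preserving_symm_measurableEquiv_toLp _).measure_preimage
      hpibox_meas.nullMeasurableSet]
    rw [volume_pi_pi]
    refine Finset.prod_congr rfl fun p _ => ?_
    rw [Real.volume_Icc]
    congr 1; ring
  calc volume {c : EuclideanSpace ℝ (Fin D × Fin n) | ‖Fm c u‖ ≤ ρ ∧ ‖c‖ ≤ a₀}
      ≤ volume (Ψ ⁻¹' box) := measure_mono hsub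
    _ = volume box := Ψ.measurePreserving.measure_preimage hbox_meas.nullMeasurableSet
    _ = ∏ p : Fin D × Fin n, ENNReal.ofReal (2 * b p) := hboxvol
    _ = ENNReal.ofReal (∏ p : Fin D × Fin n, 2 * b p) := by
        rw [← ENNReal.ofReal_prod_of_nonneg]
        exact fun p _ => by linarith [hbnn p]
    _ ≤ ENNReal.ofReal ((2 * ρ) ^ D * (2 * a₀) ^ (D * (n - 1))) := by
        apply ENNReal.ofReal_le_ofReal
        apply le_of_eq
        rw [Fintype.prod_prod_type]
        have hinner : ∀ i : Fin D, (∏ j : Fin n, 2 * b (i, j)) = 2 * ρ * (2 * a₀) ^ (n - 1) := by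
          intro i
          rw [← Finset.mul_prod_erase univ _ (mem_univ i₀)]
          have h1 : 2 * b (i, i₀) = 2 * ρ := by simp [b]
          have h2 : (∏ j ∈ univ.erase i₀, 2 * b (i, j)) = (2 * a₀) ^ (n - 1) := by
            have hc : ∀ j ∈ univ.erase i₀, 2 * b (i, j) = 2 * a₀ := fun j hj => by
              simp [b, Finset.ne_of_mem_erase hj]
            rw [Finset.prod_congr rfl hc, Finset.prod_const,
              Finset.card_erase_of_mem (mem_univ _), Finset.card_univ, Fintype.card_fin]
          rw [h1, h2]
        rw [Finset.prod_congr rfl fun i _ => hinner i, Finset.prod_const, Finset.card_univ,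
          Fintype.card_fin, mul_pow, ← pow_mul, Nat.mul_comm (n-1) D]

lemma bad_vol {d : ℕ} (C_K : ℝ) (K : Set (EuclideanSpace ℝ (Fin n)))
    (hcov : ∀ ε : ℝ, 0 < ε →
      ∃ T : Finset (EuclideanSpace ℝ (Fin n) × EuclideanSpace ℝ (Fin n)),
        (T.card : ℝ) ≤ C_K / ε ^ (2 * d) ∧ K ×ˢ K ⊆ ⋃ p ∈ T, ball p ε)
    (hD : 2 * d < D) (a₀ : ℝ) (ha₀ : 0 < a₀) (δ : ℝ) (hδ : 0 < δ) :
    volume {c : EuclideanSpace ℝ (Fin D × Fin n) |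
      (∃ x ∈ K, ∃ y ∈ K, δ ≤ dist x y ∧ Fm c x = Fm c y) ∧ ‖c‖ ≤ a₀} = 0 := by
  classical
  set m := D - 2 * d with hm
  have hDm : D = 2 * d + m := by omega
  have hm0 : m ≠ 0 := by omega
  set C₀ := C_K * ((8 * a₀ / δ) ^ D * (2 * a₀) ^ (D * (n - 1))) with hC₀
  set Bad := {c : EuclideanSpace ℝ (Fin D × Fin n) |
      (∃ x ∈ K, ∃ y ∈ K, δ ≤ dist x y ∧ Fm c x = Fm c y) ∧ ‖c‖ ≤ a₀} with hBad
  have key : ∀ ε : ℝ, 0 < ε → ε ≤ δ / 4 → volume Bad ≤ ENNReal.ofReal (C₀ * ε ^ m) := by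
    intro ε hε hε4
    obtain ⟨T, hTcard, hTcov⟩ := hcov ε hε
    set ρ := 4 * a₀ * ε / δ with hρdef
    have hρ0 : 0 ≤ ρ := by positivity
    set S : (EuclideanSpace ℝ (Fin n) × EuclideanSpace ℝ (Fin n)) →
        Set (EuclideanSpace ℝ (Fin D × Fin n)) :=
      fun t => if t.1 = t.2 then ∅ else
        {c | ‖Fm c (‖t.1 - t.2‖⁻¹ • (t.1 - t.2))‖ ≤ ρ ∧ ‖c‖ ≤ a₀} with hS
    have hsub : Bad ⊆ ⋃ t ∈ T, S t := by
      rintro c ⟨⟨x, hx, y, hy, hdist, hFeq⟩, hc⟩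
      have hxy : (x, y) ∈ K ×ˢ K := ⟨hx, hy⟩
      obtain ⟨t, ht, hmem⟩ := Set.mem_iUnion₂.1 (hTcov hxy)
      refine Set.mem_iUnion₂.2 ⟨t, ht, ?_⟩
      have hd1 : dist x t.1 < ε ∧ dist y t.2 < ε := by
        have h := mem_ball.1 hmem
        rw [Prod.dist_eq, max_lt_iff] at h
        exact h
      have hwz : ‖(t.1 - t.2) - (x - y)‖ ≤ 2 * ε := by
        have heq : (t.1 - t.2) - (x - y) = (t.1 - x) - (t.2 - y) := by abel
        rw [heq]
        calc ‖(t.1 - x) - (t.2 - y)‖ ≤ ‖t.1 - x‖ + ‖t.2 - y‖ := norm_sub_le _ _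
          _ ≤ 2 * ε := by
            rw [← dist_eq_norm, ← dist_eq_norm, dist_comm t.1 x, dist_comm t.2 y]
            linarith [hd1.1, hd1.2]
      have hxynorm : δ ≤ ‖x - y‖ := by rwa [dist_eq_norm] at hdist
      have hw_norm : δ / 2 ≤ ‖t.1 - t.2‖ := by
        have h2 : ‖x - y‖ ≤ ‖t.1 - t.2‖ + ‖(t.1 - t.2) - (x - y)‖ := by
          calc ‖x - y‖ = ‖(t.1 - t.2) - ((t.1 - t.2) - (x - y))‖ := by congr 1; abel
            _ ≤ ‖t.1 - t.2‖ + ‖(t.1 - t.2) - (x - y)‖ := norm_sub_le _ _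
        linarith
      have hwpos : (0 : ℝ) < ‖t.1 - t.2‖ := by linarith
      have hw0 : t.1 ≠ t.2 := by
        intro h
        rw [h, sub_self, norm_zero] at hwpos
        exact lt_irrefl _ hwpos
      rw [hS]
      simp only [if_neg hw0, Set.mem_setOf_eq]
      refine ⟨?_, hc⟩
      have hFz : Fm c (x - y) = 0 := by rw [Fm_sub, hFeq, sub_self]
      have h1 : ‖Fm c (t.1 - t.2)‖ ≤ a₀ * (2 * ε) :=
        calc ‖Fm c (t.1 - t.2)‖ = ‖Fm c ((t.1 - t.2) - (x - y))‖ := by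
              rw [Fm_sub c (t.1 - t.2) (x - y), hFz, sub_zero]
          _ ≤ ‖c‖ * ‖(t.1 - t.2) - (x - y)‖ := norm_Fm_le _ _
          _ ≤ a₀ * (2 * ε) := mul_le_mul hc hwz (norm_nonneg _) ha₀.le
      rw [Fm_smul, norm_smul, norm_inv, norm_norm]
      have hinv : ‖t.1 - t.2‖⁻¹ ≤ (δ / 2)⁻¹ := inv_anti₀ (by linarith) hw_norm
      calc ‖t.1 - t.2‖⁻¹ * ‖Fm c (t.1 - t.2)‖ ≤ (δ / 2)⁻¹ * (a₀ * (2 * ε)) :=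
            mul_le_mul hinv h1 (norm_nonneg _) (by positivity)
        _ = ρ := by rw [hρdef]; field_simp; ring
    have hvol_each : ∀ t, volume (S t) ≤
        ENNReal.ofReal ((2 * ρ) ^ D * (2 * a₀) ^ (D * (n - 1))) := by
      intro t
      by_cases h : t.1 = t.2
      · simp [hS, h]
      · rw [hS]
        simp only [if_neg h]
        exact slab_volume a₀ ρ hρ0 ha₀.le _ (norm_smul_inv_norm (sub_ne_zero.2 h))
    have hCnn : (0 : ℝ) ≤ C_K / ε ^ (2 * d) := le_trans (Nat.cast_nonneg _) hTcard
    calc volume Bad ≤ ∑ t ∈ T, volume (S t) :=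
          (measure_mono hsub).trans (measure_biUnion_finset_le T S)
      _ ≤ ∑ t ∈ T, ENNReal.ofReal ((2 * ρ) ^ D * (2 * a₀) ^ (D * (n - 1))) :=
          Finset.sum_le_sum fun t _ => hvol_each t
      _ = (T.card : ENNReal) * ENNReal.ofReal ((2 * ρ) ^ D * (2 * a₀) ^ (D * (n - 1))) := by
          rw [Finset.sum_const, nsmul_eq_mul]
      _ ≤ ENNReal.ofReal (C_K / ε ^ (2 * d)) *
            ENNReal.ofReal ((2 * ρ) ^ D * (2 * a₀) ^ (D * (n - 1))) := by
          refine mul_le_mul_left ?_ _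
          rw [← ENNReal.ofReal_natCast]
          exact ENNReal.ofReal_le_ofReal hTcard
      _ = ENNReal.ofReal (C_K / ε ^ (2 * d) * ((2 * ρ) ^ D * (2 * a₀) ^ (D * (n - 1)))) :=
          (ENNReal.ofReal_mul hCnn).symm
      _ = ENNReal.ofReal (C₀ * ε ^ m) := by
          congr 1
          have hεne : ε ≠ 0 := hε.ne'
          have hδne : δ ≠ 0 := hδ.ne'
          rw [hρdef, hC₀]
          have h8 : 2 * (4 * a₀ * ε / δ) = 8 * a₀ / δ * ε := by ring
          rw [h8, mul_pow (8 * a₀ / δ) ε D, hDm, pow_add ε (2 * d) m]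
          field_simp
  have hle : ∀ k : ℕ, volume Bad ≤ ENNReal.ofReal (C₀ * (δ / 4 * (1 / ((k : ℝ) + 1))) ^ m) := by
    intro k
    have hk1 : (0 : ℝ) < 1 / ((k : ℝ) + 1) := by positivity
    refine key _ (by positivity) ?_
    have : 1 / ((k : ℝ) + 1) ≤ 1 := by
      rw [div_le_one (by positivity)]
      linarith [Nat.cast_nonneg (α := ℝ) k]
    nlinarith
  have htend : Filter.Tendsto
      (fun k : ℕ => ENNReal.ofReal (C₀ * (δ / 4 * (1 / ((k : ℝ) + 1))) ^ m))
      Filter.atTop (nhds 0) := by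
    have h1 : Filter.Tendsto (fun k : ℕ => 1 / ((k : ℝ) + 1)) Filter.atTop (nhds 0) :=
      tendsto_one_div_add_atTop_nhds_zero_nat
    have h2 : Filter.Tendsto (fun k : ℕ => C₀ * (δ / 4 * (1 / ((k : ℝ) + 1))) ^ m)
        Filter.atTop (nhds (C₀ * (δ / 4 * 0) ^ m)) :=
      Filter.Tendsto.mul tendsto_const_nhds ((Filter.Tendsto.mul tendsto_const_nhds h1).pow m)
    rw [mul_zero, zero_pow hm0, mul_zero] at h2
    have := (ENNReal.continuous_ofReal.tendsto 0).comp h2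
    rw [ENNReal.ofReal_zero] at this
    exact this
  have hfin : volume Bad ≤ 0 := ge_of_tendsto' htend hle
  exact le_antisymm hfin zero_le


end Stmt6Aux

open Stmt6Aux in
theorem stmt6 (n D d : ℕ) (K : Set (EuclideanSpace ℝ (Fin n))) (hK : IsCompact K)
    (C_K : ℝ)
    (hcov : ∀ ε : ℝ, 0 < ε →
      ∃ T : Finset (EuclideanSpace ℝ (Fin n) × EuclideanSpace ℝ (Fin n)),
        (T.card : ℝ) ≤ C_K / ε ^ (2 * d) ∧ K ×ˢ K ⊆ ⋃ p ∈ T, ball p ε)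
    (hD : 2 * d < D) (a₀ : ℝ) (ha₀ : 0 < a₀) :
    volume ({c : EuclideanSpace ℝ (Fin D × Fin n) |
        Set.InjOn (fun x : EuclideanSpace ℝ (Fin n) =>
          fun i : Fin D => ∑ j, c (i, j) * x j) K} ∩ closedBall 0 a₀)
      / volume (closedBall (0 : EuclideanSpace ℝ (Fin D × Fin n)) a₀) = 1 := by
  classical
  set Sinj := {c : EuclideanSpace ℝ (Fin D × Fin n) |
      Set.InjOn (fun x : EuclideanSpace ℝ (Fin n) =>
        fun i : Fin D => ∑ j, c (i, j) * x j) K} with hSinj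
  set Bb := closedBall (0 : EuclideanSpace ℝ (Fin D × Fin n)) a₀ with hBb
  have hBne0 : volume Bb ≠ 0 := (measure_closedBall_pos volume 0 ha₀).ne'
  have hBnetop : volume Bb ≠ ⊤ := measure_closedBall_lt_top.ne
  have hnull : volume (Bb \ Sinj) = 0 := by
    have hsub : Bb \ Sinj ⊆ ⋃ k : ℕ, {c : EuclideanSpace ℝ (Fin D × Fin n) |
        (∃ x ∈ K, ∃ y ∈ K, 1 / ((k : ℝ) + 1) ≤ dist x y ∧ Fm c x = Fm c y) ∧ ‖c‖ ≤ a₀} := by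
      rintro c ⟨hcB, hcS⟩
      simp only [hSinj, Set.mem_setOf_eq, Set.InjOn] at hcS
      push_neg at hcS
      obtain ⟨x, hx, y, hy, hfeq, hne⟩ := hcS
      have hd : 0 < dist x y := dist_pos.2 hne
      obtain ⟨k, hk⟩ := exists_nat_one_div_lt hd
      refine Set.mem_iUnion.2 ⟨k, ?_⟩
      refine ⟨⟨x, hx, y, hy, le_of_lt (by exact_mod_cast hk), ?_⟩, ?_⟩
      · exact congrArg (WithLp.toLp 2) hfeq
      · rwa [hBb, mem_closedBall, dist_zero_right] at hcB
    refine measure_mono_null hsub ?_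
    exact measure_iUnion_null fun k =>
      bad_vol C_K K hcov hD a₀ ha₀ _ (by positivity)
  have h1 : volume (Sinj ∩ Bb) = volume Bb := by
    refine le_antisymm (measure_mono Set.inter_subset_right) ?_
    calc volume Bb ≤ volume ((Sinj ∩ Bb) ∪ (Bb \ Sinj)) := by
          refine measure_mono fun c hc => ?_
          by_cases h : c ∈ Sinj
          · exact Or.inl ⟨h, hc⟩
          · exact Or.inr ⟨hc, h⟩
      _ ≤ volume (Sinj ∩ Bb) + volume (Bb \ Sinj) := measure_union_le _ _
      _ = volume (Sinj ∩ Bb) := by rw [hnull, add_zero]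
  rw [h1, ENNReal.div_self hBne0 hBnetop]
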